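/- Let Y be a scheme, Z ↪ Y a closed immersion defined by a quasi-coherent ideal ℐ ⊆ 𝒪_Y, and C_Z Y = Spec(⊕_{m∈ℤ} ℐ^m/ℐ^{m+1}) the normal cone (with ℐ^m = 𝒪_Y for m ≤ 0). For a quasi-coherent ideal 𝒦 ⊆ 𝒪_Y defining a closed subscheme W ↪ Y, let 𝒦̂ = ⊕_{m∈ℤ} (𝒦ℐ^m + ℐ^{m+1})/ℐ^{m+1} be the corresponding ideal of 𝒪_{C_Z Y}, so that C_Z Y|_{W×_Y Z} is the closed subscheme defined by 𝒦̂. Then for quasi-coherent ideals 𝒦, ℒ ⊆ 𝒪_Y one has (𝒦·ℒ)^ = 𝒦̂·ℒ̂, and in particular for every n ≥ 1, (𝒦̂)ⁿ = ⊕_{m∈ℤ} (𝒦ⁿℐ^m + ℐ^{m+1})/ℐ^{m+1}. -/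

import Mathlib

/-!
# Statement 16: ideals on the normal cone and products

Let `Z ↪ Y` be a closed immersion defined by a quasi-coherent ideal `ℐ ⊆ 𝒪_Y`, and let
`C_Z Y = Spec(⊕_{m∈ℤ} ℐ^m/ℐ^{m+1})` be the normal cone (with the convention `ℐ^m = 𝒪_Y` for
`m ≤ 0`).  For a quasi-coherent ideal `𝒦 ⊆ 𝒪_Y` let
`𝒦̂ = ⊕_{m∈ℤ} (𝒦ℐ^m + ℐ^{m+1})/ℐ^{m+1}` be the corresponding ideal of `𝒪_{C_Z Y}`, so that
`C_Z Y|_{W ×_Y Z}` is the closed subscheme defined by `𝒦̂` (`W` the subscheme of `𝒦`).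
Then `(𝒦·ℒ)^ = 𝒦̂·ℒ̂`, and in particular `(𝒦̂)ⁿ = ⊕_{m∈ℤ} (𝒦ⁿℐ^m + ℐ^{m+1})/ℐ^{m+1}`
for every `n ≥ 1` (Remark 1.5 of the paper).

We formalize the affine (equivalently, local) model: `Y = Spec R` and the ideals `I, K, L` of
a commutative ring `R`.  The degree-`m` component of the graded ring `⊕ I^m/I^{m+1}` being
`I^m/I^{m+1}` (`I^m := I^{max(m,0)}` via `Int.toNat`), the degree-`m` component of `𝒦̂` is the
image of `K·I^m`, and the identities `(𝒦·ℒ)^ = 𝒦̂·ℒ̂` and `(𝒦̂)ⁿ = (𝒦ⁿ)^` are, degree by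
degree, equalities of ideals of `R` modulo `I^{m+1}` — i.e. equalities after adding
`I^{m+1}`, with the products of graded pieces expanded by degree (`⨆` over the decompositions
of the degree).
-/

noncomputable section

/-- power of an ideal with integer exponent, with the convention `I^m = R` for `m ≤ 0`. -/
def Ideal.zpowNC {R : Type} [CommRing R] (I : Ideal R) (m : ℤ) : Ideal R := I ^ m.toNat

namespace NCAux
variable {R : Type} [CommRing R] (I K : Ideal R)

lemma zpow_zero : I.zpowNC 0 = 1 := by simp [Ideal.zpowNC]

lemma zpow_anti {a b : ℤ} (h : a ≤ b) : I.zpowNC b ≤ I.zpowNC a :=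
  Ideal.pow_le_pow_right (Int.toNat_le_toNat h)

lemma zpow_mul_le (a b : ℤ) : I.zpowNC a * I.zpowNC b ≤ I.zpowNC (a + b) := by
  rw [Ideal.zpowNC, Ideal.zpowNC, Ideal.zpowNC, ← pow_add]
  exact Ideal.pow_le_pow_right (by omega)

lemma prod_bound {ι : Type} (s : Finset ι) (a : ι → ℤ) :
    (∏ i ∈ s, (K * I.zpowNC (a i) + I.zpowNC (a i + 1)))
      ≤ K ^ s.card * I.zpowNC (∑ i ∈ s, a i) + I.zpowNC ((∑ i ∈ s, a i) + 1) := by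
  classical
  induction s using Finset.induction with
  | empty => simp [Ideal.zpowNC, Ideal.one_eq_top]
  | @insert i s hi ih =>
    rw [Finset.prod_insert hi, Finset.sum_insert hi, Finset.card_insert_of_notMem hi]
    calc (K * I.zpowNC (a i) + I.zpowNC (a i + 1)) * ∏ j ∈ s, (K * I.zpowNC (a j) + I.zpowNC (a j + 1))
        ≤ (K * I.zpowNC (a i) + I.zpowNC (a i + 1)) *
            (K ^ s.card * I.zpowNC (∑ j ∈ s, a j) + I.zpowNC ((∑ j ∈ s, a j) + 1)) :=
          Ideal.mul_mono_right ih
      _ ≤ K ^ (s.card + 1) * I.zpowNC (a i + ∑ j ∈ s, a j) +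
            I.zpowNC (a i + ∑ j ∈ s, a j + 1) := by
          set b := a i
          set S := ∑ j ∈ s, a j
          rw [mul_add, add_mul, add_mul]
          refine sup_le (sup_le ?_ ?_) (sup_le ?_ ?_)
          · refine le_sup_of_le_left ?_
            calc K * I.zpowNC b * (K ^ s.card * I.zpowNC S)
                = K ^ (s.card + 1) * (I.zpowNC b * I.zpowNC S) := by ring
              _ ≤ K ^ (s.card + 1) * I.zpowNC (b + S) :=
                  Ideal.mul_mono_right (zpow_mul_le I b S)
          · refine le_sup_of_le_right ?_
            calc I.zpowNC (b + 1) * (K ^ s.card * I.zpowNC S)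
                ≤ I.zpowNC (b + 1) * I.zpowNC S :=
                  Ideal.mul_mono_right Ideal.mul_le_right
              _ ≤ I.zpowNC (b + 1 + S) := zpow_mul_le I _ _
              _ ≤ I.zpowNC (b + S + 1) := by rw [show b + 1 + S = b + S + 1 by ring]
          · refine le_sup_of_le_right ?_
            calc K * I.zpowNC b * I.zpowNC (S + 1)
                ≤ I.zpowNC b * I.zpowNC (S + 1) :=
                  Ideal.mul_mono_left Ideal.mul_le_right
              _ ≤ I.zpowNC (b + (S + 1)) := zpow_mul_le I _ _
              _ ≤ I.zpowNC (b + S + 1) := by rw [show b + (S+1) = b + S + 1 by ring]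
          · refine le_sup_of_le_right ?_
            calc I.zpowNC (b + 1) * I.zpowNC (S + 1)
                ≤ I.zpowNC (b + 1 + (S + 1)) := zpow_mul_le I _ _
              _ ≤ I.zpowNC (b + S + 1) := zpow_anti I (by omega)

lemma prod_mono {ι : Type*} (s : Finset ι) {f g : ι → Ideal R} (h : ∀ i ∈ s, f i ≤ g i) :
    ∏ i ∈ s, f i ≤ ∏ i ∈ s, g i := by
  classical
  induction s using Finset.induction with
  | empty => simp
  | @insert i s hi ih =>
    rw [Finset.prod_insert hi, Finset.prod_insert hi]
    exact Ideal.mul_mono (h i (by simp)) (ih fun j hj => h j (by simp [hj]))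

end NCAux

open NCAux

/-- **Products of ideals on the normal cone** (Remark 1.5 of the paper).  For ideals
`I, K, L` of a commutative ring `R`:
(1) `(K·L)^ = K̂·L̂` — in degree `m`, the component of `K̂·L̂` is
`Σ_{a+b=m} K̂_a·L̂_b` and this agrees with the image of `K·L·I^m` modulo `I^{m+1}`;
(2) in particular `(K̂)ⁿ = ⊕_m (Kⁿ I^m + I^{m+1})/I^{m+1}` for all `n ≥ 1`: in degree `m`
the component `Σ_{a₁+⋯+aₙ=m} K̂_{a₁}⋯K̂_{aₙ}` agrees with the image of `Kⁿ·I^m` modulo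
`I^{m+1}`. -/


theorem normalCone_hat_ideal_mul
    {R : Type} [CommRing R] (I K L : Ideal R) :
    -- (1) `(K·L)^ = K̂·L̂`, degreewise modulo `I^{m+1}`:
    (∀ m : ℤ,
      (⨆ a : ℤ, (K * I.zpowNC a + I.zpowNC (a + 1)) *
          (L * I.zpowNC (m - a) + I.zpowNC (m - a + 1))) + I.zpowNC (m + 1)
        = K * L * I.zpowNC m + I.zpowNC (m + 1)) ∧
    -- (2) `(K̂)ⁿ = ⊕_m (Kⁿ I^m + I^{m+1})/I^{m+1}`, degreewise modulo `I^{m+1}`: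
    (∀ (n : ℕ), 1 ≤ n → ∀ m : ℤ,
      (⨆ (a : Fin n → ℤ) (_ : ∑ i, a i = m),
          ∏ i, (K * I.zpowNC (a i) + I.zpowNC (a i + 1))) + I.zpowNC (m + 1)
        = K ^ n * I.zpowNC m + I.zpowNC (m + 1)) := by

  constructor
  · intro m
    apply le_antisymm
    · refine sup_le ?_ le_sup_right
      refine iSup_le fun a => ?_
      calc (K * I.zpowNC a + I.zpowNC (a + 1)) * (L * I.zpowNC (m - a) + I.zpowNC (m - a + 1))
          = K * I.zpowNC a * (L * I.zpowNC (m - a))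
              + K * I.zpowNC a * I.zpowNC (m - a + 1)
              + (I.zpowNC (a + 1) * (L * I.zpowNC (m - a))
              + I.zpowNC (a + 1) * I.zpowNC (m - a + 1)) := by ring
        _ ≤ K * L * I.zpowNC m + I.zpowNC (m + 1) := by
          refine sup_le (sup_le ?_ ?_) (sup_le ?_ ?_)
          · refine le_sup_of_le_left ?_
            calc K * I.zpowNC a * (L * I.zpowNC (m - a))
                = K * L * (I.zpowNC a * I.zpowNC (m - a)) := by ring
              _ ≤ K * L * I.zpowNC m := by
                  refine Ideal.mul_mono_right ?_
                  simpa using zpow_mul_le I a (m - a)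
          · refine le_sup_of_le_right ?_
            calc K * I.zpowNC a * I.zpowNC (m - a + 1)
                ≤ I.zpowNC a * I.zpowNC (m - a + 1) :=
                  Ideal.mul_mono_left Ideal.mul_le_right
              _ ≤ I.zpowNC (a + (m - a + 1)) := zpow_mul_le I _ _
              _ = I.zpowNC (m + 1) := by ring_nf
          · refine le_sup_of_le_right ?_
            calc I.zpowNC (a + 1) * (L * I.zpowNC (m - a))
                ≤ I.zpowNC (a + 1) * I.zpowNC (m - a) :=
                  Ideal.mul_mono_right Ideal.mul_le_right
              _ ≤ I.zpowNC (a + 1 + (m - a)) := zpow_mul_le I _ _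
              _ = I.zpowNC (m + 1) := by ring_nf
          · refine le_sup_of_le_right ?_
            calc I.zpowNC (a + 1) * I.zpowNC (m - a + 1)
                ≤ I.zpowNC (a + 1 + (m - a + 1)) := zpow_mul_le I _ _
              _ ≤ I.zpowNC (m + 1) := zpow_anti I (by omega)
    · refine sup_le ?_ le_sup_right
      refine le_sup_of_le_left (le_iSup_of_le 0 ?_)
      calc K * L * I.zpowNC m
          = (K * I.zpowNC 0) * (L * I.zpowNC (m - 0)) := by
            rw [NCAux.zpow_zero, sub_zero]; ring
        _ ≤ (K * I.zpowNC 0 + I.zpowNC (0 + 1)) *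
              (L * I.zpowNC (m - 0) + I.zpowNC (m - 0 + 1)) :=
            Ideal.mul_mono le_sup_left le_sup_left
  · intro n hn m
    apply le_antisymm
    · refine sup_le ?_ le_sup_right
      refine iSup_le fun a => iSup_le fun hsum => ?_
      have := prod_bound I K (Finset.univ : Finset (Fin n)) a
      simpa [hsum] using this
    · refine sup_le ?_ le_sup_right
      have hn' : 0 < n := hn
      set i0 : Fin n := ⟨0, hn'⟩
      set a0 : Fin n → ℤ := fun i => if i = i0 then m else 0 with ha0
      have hsum : ∑ i, a0 i = m := by simp [ha0]
      refine le_sup_of_le_left (le_iSup_of_le a0 (le_iSup_of_le hsum ?_))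
      have h1 : (∏ i, (K * I.zpowNC (a0 i))) = K ^ n * I.zpowNC m := by
        rw [Finset.prod_mul_distrib, Finset.prod_const, Finset.card_univ, Fintype.card_fin]
        congr 1
        have : ∀ i, I.zpowNC (a0 i) = if i = i0 then I.zpowNC m else 1 := by
          intro i
          by_cases h : i = i0 <;> simp [ha0, h, NCAux.zpow_zero]
        rw [Finset.prod_congr rfl fun i _ => this i, Finset.prod_ite_eq']
        simp
      rw [← h1]
      exact prod_mono Finset.univ fun i _ => le_sup_left


end
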